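/- The greedy vector x* defined by x*(n) = f({n},∅) and x*(i) = f({n,…,i},∅) − f({n,…,i+1},∅) for i = n−1,…,1 maximizes Σᵢ w(i)x(i) over P₊(f) for any weight vector w with w(n) ≫ ⋯ ≫ w(1) > 0 sufficiently separated; in particular x* is an extreme point of P₊(f). -/

import Mathlib

open Finset

namespace GreedyAux

variable {n : ℕ}

def Ak (n k : ℕ) : Finset (Fin n) := Finset.univ.filter (fun j => k ≤ (j : ℕ))

lemma mem_Ak {k : ℕ} {j : Fin n} : j ∈ Ak n k ↔ k ≤ (j : ℕ) := by simp [Ak]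

lemma Ak_zero : Ak n 0 = Finset.univ := by
  ext j; simp [mem_Ak]

lemma Ak_of_le {k : ℕ} (hk : n ≤ k) : Ak n k = ∅ := by
  ext j
  simp only [mem_Ak, Finset.notMem_empty, iff_false]
  have := j.isLt; omega

lemma Ak_insert {k : ℕ} (hk : k < n) : Ak n k = insert ⟨k, hk⟩ (Ak n (k + 1)) := by
  ext j
  simp only [mem_Ak, Finset.mem_insert, Fin.ext_iff]
  omega

lemma not_mem_Ak_succ {k : ℕ} (hk : k < n) : (⟨k, hk⟩ : Fin n) ∉ Ak n (k + 1) := by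
  simp [mem_Ak]

/-- The greedy vector. -/
def xs (f : Finset (Fin n) → Finset (Fin n) → ℝ) (i : Fin n) : ℝ :=
  f (Ak n (i : ℕ)) ∅ - f (Ak n ((i : ℕ) + 1)) ∅

section

variable (f : Finset (Fin n) → Finset (Fin n) → ℝ)
    (hbi : ∀ X₁ Y₁ X₂ Y₂ : Finset (Fin n), Disjoint X₁ Y₁ → Disjoint X₂ Y₂ →
      f ((X₁ ∪ X₂) \ (Y₁ ∪ Y₂)) ((Y₁ ∪ Y₂) \ (X₁ ∪ X₂)) + f (X₁ ∩ X₂) (Y₁ ∩ Y₂)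
        ≤ f X₁ Y₁ + f X₂ Y₂)
    (hf0 : f ∅ ∅ = 0)

include hf0 in
lemma tight : ∀ m, m ≤ n → ∑ j ∈ Ak n (n - m), xs f j = f (Ak n (n - m)) ∅ := by
  intro m
  induction m with
  | zero => intro _; simp [Nat.sub_zero, Ak_of_le le_rfl, hf0]
  | succ m ih =>
    intro hm
    have hk : n - (m + 1) < n := by omega
    have hk1 : n - (m + 1) + 1 = n - m := by omega
    rw [Ak_insert hk, Finset.sum_insert (not_mem_Ak_succ hk)]
    have hih := ih (by omega)
    rw [← hk1] at hih
    have hxv : xs f (⟨n - (m+1), hk⟩ : Fin n)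
        = f (Ak n (n - (m+1))) ∅ - f (Ak n (n - (m+1) + 1)) ∅ := rfl
    rw [hih, hxv, ← Ak_insert hk]
    ring

include hf0 in
lemma tight' : ∀ k, k ≤ n → ∑ j ∈ Ak n k, xs f j = f (Ak n k) ∅ := by
  intro k hk
  have := tight f hf0 (n - k) (by omega)
  rwa [show n - (n - k) = k by omega] at this

include hbi hf0 in
lemma feas : ∀ X : Finset (Fin n), ∑ i ∈ X, xs f i ≤ f X ∅ := by
  intro X
  induction X using Finset.strongInduction with
  | _ X ih =>
    rcases X.eq_empty_or_nonempty with rfl | hX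
    · simp [hf0]
    · set i := X.min' hX with hidef
      have hiX : i ∈ X := X.min'_mem hX
      have key1 : X ∪ Ak n ((i : ℕ) + 1) = Ak n (i : ℕ) := by
        ext j
        simp only [Finset.mem_union, mem_Ak]
        constructor
        · rintro (hj | hj)
          · exact Fin.le_def.mp (X.min'_le j hj)
          · omega
        · intro hj
          rcases eq_or_lt_of_le hj with h | h
          · left; have hji : j = i := Fin.ext h.symm; rw [hji]; exact hiX
          · right; omega
      have key2 : X ∩ Ak n ((i : ℕ) + 1) = X.erase i := by
        ext j
        simp only [Finset.mem_inter, mem_Ak, Finset.mem_erase]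
        constructor
        · rintro ⟨hjX, hj⟩
          refine ⟨fun h => ?_, hjX⟩
          subst h; omega
        · rintro ⟨hne, hjX⟩
          refine ⟨hjX, ?_⟩
          have h1 : (i : ℕ) ≤ (j : ℕ) := Fin.le_def.mp (X.min'_le j hjX)
          have h2 : (i : ℕ) ≠ (j : ℕ) := fun h => hne (Fin.ext h.symm)
          omega
      have hb := hbi X ∅ (Ak n ((i : ℕ) + 1)) ∅ (Finset.disjoint_empty_right _)
        (Finset.disjoint_empty_right _)
      simp only [Finset.union_empty, Finset.sdiff_empty, Finset.empty_sdiff,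
        Finset.inter_empty] at hb
      rw [key1, key2] at hb
      have ih' := ih (X.erase i) (Finset.erase_ssubset hiX)
      have hsum : ∑ j ∈ X, xs f j = xs f i + ∑ j ∈ X.erase i, xs f j :=
        (Finset.add_sum_erase _ _ hiX).symm
      have hxi : xs f i = f (Ak n (i : ℕ)) ∅ - f (Ak n ((i : ℕ) + 1)) ∅ := rfl
      linarith

include hbi hf0 in
lemma memP : ∀ X Y : Finset (Fin n), Disjoint X Y →
    ∑ i ∈ X, xs f i - ∑ i ∈ Y, xs f i ≤ f X Y := by
  intro X Y hXY
  have h1 := feas f hbi hf0 X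
  have h2 := feas f hbi hf0 (Finset.univ \ Y)
  have h3 : ∑ j ∈ (Finset.univ : Finset (Fin n)), xs f j = f Finset.univ ∅ := by
    have := tight' f hf0 0 (Nat.zero_le n)
    rwa [Ak_zero] at this
  have hsplit : ∑ j ∈ Finset.univ \ Y, xs f j + ∑ j ∈ Y, xs f j
      = ∑ j ∈ (Finset.univ : Finset (Fin n)), xs f j :=
    Finset.sum_sdiff (Finset.subset_univ Y)
  have hb := hbi X Y Finset.univ ∅ hXY (Finset.disjoint_empty_right _)
  rw [show X ∪ (Finset.univ : Finset (Fin n)) = Finset.univ from by simp,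
    Finset.union_empty, Finset.inter_univ, Finset.inter_empty] at hb
  rw [show Y \ (Finset.univ : Finset (Fin n)) = ∅ from by simp] at hb
  linarith

end

end GreedyAux

open GreedyAux

/-- The greedy vector `x*` (with `x*(i) = f({n,…,i},∅) − f({n,…,i+1},∅)`) belongs to
`P₊(f)`, is tight on the sets `{n,…,i}`, and is an extreme point of `P₊(f)`. -/
theorem greedy_vertex {n : ℕ} (f : Finset (Fin n) → Finset (Fin n) → ℝ)
    (hbi : ∀ X₁ Y₁ X₂ Y₂ : Finset (Fin n), Disjoint X₁ Y₁ → Disjoint X₂ Y₂ →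
      f ((X₁ ∪ X₂) \ (Y₁ ∪ Y₂)) ((Y₁ ∪ Y₂) \ (X₁ ∪ X₂)) + f (X₁ ∩ X₂) (Y₁ ∩ Y₂)
        ≤ f X₁ Y₁ + f X₂ Y₂)
    (hf0 : f ∅ ∅ = 0) :
    letI xstar : Fin n → ℝ := fun i =>
      f (Finset.univ.filter fun j => i ≤ j) ∅ -
        f (Finset.univ.filter fun j => i < j) ∅
    (∀ X Y : Finset (Fin n), Disjoint X Y →
        ∑ i ∈ X, xstar i - ∑ i ∈ Y, xstar i ≤ f X Y) ∧
    (∀ i : Fin n, ∑ j ∈ Finset.univ.filter (fun j => i ≤ j), xstar j =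
        f (Finset.univ.filter fun j => i ≤ j) ∅) ∧
    xstar ∈ Set.extremePoints ℝ {x : Fin n → ℝ | ∀ X Y : Finset (Fin n),
      Disjoint X Y → ∑ i ∈ X, x i - ∑ i ∈ Y, x i ≤ f X Y} := by
  have hfe : ∀ i : Fin n, (Finset.univ.filter fun j => i ≤ j) = Ak n (i : ℕ) := by
    intro i; ext j; simp only [Finset.mem_filter, Finset.mem_univ, true_and, mem_Ak, Fin.le_def]
  have hfl : ∀ i : Fin n, (Finset.univ.filter fun j => i < j) = Ak n ((i : ℕ) + 1) := by
    intro i; ext j; simp only [Finset.mem_filter, Finset.mem_univ, true_and, mem_Ak,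
      Fin.lt_def]; omega
  have hx : (fun i : Fin n =>
      f (Finset.univ.filter fun j => i ≤ j) ∅ -
        f (Finset.univ.filter fun j => i < j) ∅) = xs f := by
    funext i
    rw [hfe, hfl]; rfl
  show (∀ X Y : Finset (Fin n), Disjoint X Y →
        ∑ i ∈ X, xs f i - ∑ i ∈ Y, xs f i ≤ f X Y) ∧
    (∀ i : Fin n, ∑ j ∈ Finset.univ.filter (fun j => i ≤ j), xs f j =
        f (Finset.univ.filter fun j => i ≤ j) ∅) ∧
    xs f ∈ Set.extremePoints ℝ {x : Fin n → ℝ | ∀ X Y : Finset (Fin n),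
      Disjoint X Y → ∑ i ∈ X, x i - ∑ i ∈ Y, x i ≤ f X Y}
  refine ⟨memP f hbi hf0, ?_, ?_⟩
  · intro i
    rw [hfe]
    exact tight' f hf0 (i : ℕ) i.isLt.le
  · rw [mem_extremePoints]
    refine ⟨fun X Y h => memP f hbi hf0 X Y h, ?_⟩
    intro x₁ hx₁ x₂ hx₂ hseg
    obtain ⟨a, b, ha, hb, hab, hsum⟩ := hseg
    have hpt : ∀ j, a * x₁ j + b * x₂ j = xs f j := by
      intro j
      have := congrFun hsum j
      simpa using this
    have tightboth : ∀ k, k ≤ n →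
        ∑ j ∈ Ak n k, x₁ j = f (Ak n k) ∅ ∧ ∑ j ∈ Ak n k, x₂ j = f (Ak n k) ∅ := by
      intro k hk
      have h1 : ∑ j ∈ Ak n k, x₁ j ≤ f (Ak n k) ∅ := by
        have := hx₁ (Ak n k) ∅ (Finset.disjoint_empty_right _)
        simpa using this
      have h2 : ∑ j ∈ Ak n k, x₂ j ≤ f (Ak n k) ∅ := by
        have := hx₂ (Ak n k) ∅ (Finset.disjoint_empty_right _)
        simpa using this
      have h3 : a * (∑ j ∈ Ak n k, x₁ j) + b * (∑ j ∈ Ak n k, x₂ j) = f (Ak n k) ∅ := by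
        rw [Finset.mul_sum, Finset.mul_sum, ← Finset.sum_add_distrib]
        rw [Finset.sum_congr rfl (fun j _ => hpt j)]
        exact tight' f hf0 k hk
      have hcomb : a * (f (Ak n k) ∅ - ∑ j ∈ Ak n k, x₁ j)
          + b * (f (Ak n k) ∅ - ∑ j ∈ Ak n k, x₂ j) = 0 := by
        linear_combination f (Ak n k) ∅ * hab - h3
      have p1 : 0 ≤ a * (f (Ak n k) ∅ - ∑ j ∈ Ak n k, x₁ j) :=
        mul_nonneg ha.le (by linarith)
      have p2 : 0 ≤ b * (f (Ak n k) ∅ - ∑ j ∈ Ak n k, x₂ j) :=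
        mul_nonneg hb.le (by linarith)
      have q1 : a * (f (Ak n k) ∅ - ∑ j ∈ Ak n k, x₁ j) = 0 := by linarith
      have q2 : b * (f (Ak n k) ∅ - ∑ j ∈ Ak n k, x₂ j) = 0 := by linarith
      constructor
      · have := (mul_eq_zero.mp q1).resolve_left (ne_of_gt ha); linarith
      · have := (mul_eq_zero.mp q2).resolve_left (ne_of_gt hb); linarith
    have key : ∀ x : Fin n → ℝ,
        (∀ k, k ≤ n → ∑ j ∈ Ak n k, x j = f (Ak n k) ∅) → x = xs f := by
      intro x hxt
      funext i
      have hlt : (i : ℕ) < n := i.isLt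
      have e1 := hxt (i : ℕ) hlt.le
      have e2 := hxt ((i : ℕ) + 1) hlt
      rw [Ak_insert hlt, Finset.sum_insert (not_mem_Ak_succ hlt)] at e1
      have : x ⟨(i : ℕ), hlt⟩ = f (Ak n (i : ℕ)) ∅ - f (Ak n ((i : ℕ) + 1)) ∅ := by
        rw [← Ak_insert hlt] at e1
        linarith
      simpa [Fin.eta, xs] using this
    exact ⟨key x₁ (fun k hk => (tightboth k hk).1), key x₂ (fun k hk => (tightboth k hk).2)⟩
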